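/- Let (x₁, y₁, x₂, y₂, Γ, σ) : (−∞, t₀] → ℝ⁶ be a differentiable solution of the soliton system with σ(t) = 0 and J(t) = 0 for all t ≤ t₀, and suppose the solution converges, as t → −∞, to the Good Fill fixed point gf = (p₁−1, 0, 0, −1, −p₁, 0). Then F(t) = 0 for all t ≤ t₀. -/

import Mathlib

/-- A solution of the soliton system on `(−∞, t₀]` with `σ ≡ 0`
and `J ≡ 0` that converges, as `t → −∞`, to the Good Fill fixed point
`gf = (p₁−1, 0, 0, −1, −p₁, 0)` satisfies `F(t) = 0` for all `t ≤ t₀`, where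
`F = Γ + Σ_{α} p_α (1 + y_α)`. -/
theorem F_vanishes_on_orbits_from_good_fill
    (p₁ p₂ : ℤ) (hp₁ : 2 ≤ p₁) (hp₂ : 2 ≤ p₂) (lam : ℝ)
    (t₀ : ℝ)
    (x₁ y₁ x₂ y₂ Γ σ : ℝ → ℝ)
    (hx₁ : ∀ t, t ≤ t₀ → HasDerivAt x₁ (-2 * x₁ t * y₁ t) t)
    (hy₁ : ∀ t, t ≤ t₀ → HasDerivAt y₁ (x₁ t + (Γ t + 1 - lam * σ t) * y₁ t + Γ t + 1) t)
    (hx₂ : ∀ t, t ≤ t₀ → HasDerivAt x₂ (-2 * x₂ t * y₂ t) t)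
    (hy₂ : ∀ t, t ≤ t₀ → HasDerivAt y₂ (x₂ t + (Γ t + 1 - lam * σ t) * y₂ t + Γ t + 1) t)
    (hΓ : ∀ t, t ≤ t₀ → HasDerivAt Γ
      (Γ t + (p₁ : ℝ) * (1 + y₁ t) ^ 2 + (p₂ : ℝ) * (1 + y₂ t) ^ 2) t)
    (hσ : ∀ t, t ≤ t₀ → HasDerivAt σ (2 * σ t) t)
    (hσ0 : ∀ t, t ≤ t₀ → σ t = 0)
    (hJ0 : ∀ t, t ≤ t₀ →
      (1 / 2) * ((p₁ : ℝ) * (x₁ t + (1 + y₁ t) ^ 2) + (p₂ : ℝ) * (x₂ t + (1 + y₂ t) ^ 2))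
        - (1 / 2) * (Γ t) ^ 2 = 0)
    (hlim₁ : Filter.Tendsto x₁ Filter.atBot (nhds ((p₁ : ℝ) - 1)))
    (hlim₂ : Filter.Tendsto y₁ Filter.atBot (nhds 0))
    (hlim₃ : Filter.Tendsto x₂ Filter.atBot (nhds 0))
    (hlim₄ : Filter.Tendsto y₂ Filter.atBot (nhds (-1)))
    (hlim₅ : Filter.Tendsto Γ Filter.atBot (nhds (-(p₁ : ℝ))))
    (hlim₆ : Filter.Tendsto σ Filter.atBot (nhds 0)) :
    ∀ t, t ≤ t₀ → Γ t + (p₁ : ℝ) * (1 + y₁ t) + (p₂ : ℝ) * (1 + y₂ t) = 0 := by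
  set F : ℝ → ℝ := fun t => Γ t + (p₁ : ℝ) * (1 + y₁ t) + (p₂ : ℝ) * (1 + y₂ t) with hFdef
  -- derivative of F
  have hF' : ∀ t, t ≤ t₀ → HasDerivAt F ((Γ t + 1) * F t) t := by
    intro t ht
    have h1 : HasDerivAt (fun s => (p₁ : ℝ) * (1 + y₁ s))
        ((p₁ : ℝ) * (x₁ t + (Γ t + 1 - lam * σ t) * y₁ t + Γ t + 1)) t := by
      simpa using ((hasDerivAt_const t (1 : ℝ)).add (hy₁ t ht)).const_mul (p₁ : ℝ)
    have h2 : HasDerivAt (fun s => (p₂ : ℝ) * (1 + y₂ s))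
        ((p₂ : ℝ) * (x₂ t + (Γ t + 1 - lam * σ t) * y₂ t + Γ t + 1)) t := by
      simpa using ((hasDerivAt_const t (1 : ℝ)).add (hy₂ t ht)).const_mul (p₂ : ℝ)
    have h := ((hΓ t ht).add h1).add h2
    convert h using 1
    case e'_4 => rfl
    case e'_5 => rfl
    case e'_8 => rfl
    have hσt := hσ0 t ht
    have hJ := hJ0 t ht
    rw [hσt]
    simp only [hFdef]
    linear_combination (-2 : ℝ) * hJ
  -- continuity of F on Iic t₀
  have hFc : ∀ t, t ≤ t₀ → ContinuousAt F t := fun t ht => (hF' t ht).continuousAt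
  -- F tends to 0 at -∞
  have hFlim : Filter.Tendsto F Filter.atBot (nhds 0) := by
    have h : Filter.Tendsto F Filter.atBot
        (nhds (-(p₁ : ℝ) + (p₁ : ℝ) * (1 + 0) + (p₂ : ℝ) * (1 + (-1)))) := by
      exact (hlim₅.add (((tendsto_const_nhds.add hlim₂)).const_mul _)).add
        (((tendsto_const_nhds.add hlim₄)).const_mul _)
    convert h using 2
    ring
  -- find a₀ ≤ t₀ with Γ ≤ -1 on (-∞, a₀]
  have hΓlt : ∀ᶠ t in Filter.atBot, Γ t < -1 := by
    apply hlim₅.eventually_lt_const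
    have : (2 : ℝ) ≤ (p₁ : ℝ) := by exact_mod_cast hp₁
    linarith
  obtain ⟨a₀, ha₀⟩ := (hΓlt.and (Filter.eventually_le_atBot t₀)).exists_forall_of_atBot
  have ha₀t₀ : a₀ ≤ t₀ := (ha₀ a₀ le_rfl).2
  -- F² is antitone on Iic a₀
  have hanti : AntitoneOn (fun t => F t ^ 2) (Set.Iic a₀) := by
    apply antitoneOn_of_hasDerivWithinAt_nonpos (convex_Iic a₀)
      (f' := fun t => 2 * F t ^ 1 * ((Γ t + 1) * F t))
    · intro t ht
      exact (((hF' t (le_trans ht ha₀t₀)).pow 2).continuousAt).continuousWithinAt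
    · intro t ht
      rw [interior_Iic] at ht
      exact (((hF' t (le_trans (le_of_lt ht) ha₀t₀)).pow 2)).hasDerivWithinAt
    · intro t ht
      rw [interior_Iic] at ht
      have h1 : Γ t < -1 := (ha₀ t (le_of_lt ht)).1
      nlinarith [sq_nonneg (F t)]
  -- F vanishes on Iic a₀
  have hFz : ∀ a, a ≤ a₀ → F a = 0 := by
    intro a ha
    have hle : ∀ t, t ≤ a → F a ^ 2 ≤ F t ^ 2 := by
      intro t ht
      exact hanti (le_trans ht ha) ha ht
    have h0 : F a ^ 2 ≤ 0 := by
      have hl : Filter.Tendsto (fun t => F t ^ 2) Filter.atBot (nhds 0) := by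
        simpa using hFlim.pow 2
      refine ge_of_tendsto hl ?_
      filter_upwards [Filter.eventually_le_atBot a] with t ht
      exact hle t ht
    have := le_antisymm h0 (sq_nonneg _)
    exact pow_eq_zero_iff (two_ne_zero) |>.mp this
  -- on [a₀, t₀] use Grönwall with F a₀ = 0
  intro t ht
  rcases le_or_gt t a₀ with h | h
  · exact hFz t h
  · -- bound on Γ + 1 on compact [a₀, t₀]
    have hΓcont : ContinuousOn (fun s => |Γ s + 1|) (Set.Icc a₀ t₀) := by
      apply ContinuousOn.abs
      apply ContinuousOn.add _ continuousOn_const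
      intro s hs
      exact ((hΓ s hs.2).continuousAt).continuousWithinAt
    obtain ⟨K, hK⟩ := (isCompact_Icc (a := a₀) (b := t₀)).exists_bound_of_continuousOn hΓcont
    have key := norm_le_gronwallBound_of_norm_deriv_right_le (f := F)
      (f' := fun s => (Γ s + 1) * F s) (δ := 0) (K := K) (ε := 0) (a := a₀) (b := t₀)
      (fun s hs => (hFc s hs.2).continuousWithinAt)
      (fun s hs => ((hF' s (le_of_lt hs.2)).hasDerivWithinAt))
      (by simp [hFz a₀ le_rfl])
      (by
        intro s hs
        have hb := hK s (Set.mem_Icc.mpr ⟨hs.1, le_of_lt hs.2⟩)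
        rw [Real.norm_eq_abs, abs_abs] at hb
        rw [Real.norm_eq_abs, Real.norm_eq_abs, abs_mul, add_zero]
        exact mul_le_mul_of_nonneg_right hb (abs_nonneg _))
    have := key t ⟨le_of_lt h, ht⟩
    rw [gronwallBound_ε0, zero_mul] at this
    have := le_antisymm this (norm_nonneg _)
    simpa using this
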